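/- Let m, n ≥ 0, let [a,b] and [c,d] be intervals with b − a = d − c = h > 0, and let F ∈ C^{m+1,n+1}([a,b]×[c,d]), i.e., all mixed partial derivatives F^{(i,j)} = ∂^{i+j}F/∂x^i∂y^j with 0 ≤ i ≤ m+1, 0 ≤ j ≤ n+1 exist and are continuous on [a,b]×[c,d]. Let W_{m,n} := { G_1 + G_2 : G_1, G_2 ∈ C([a,b]×[c,d]), G_1(·,v) ∈ Π_m for every v ∈ [c,d], and G_2(u,·) ∈ Π_n for every u ∈ [a,b] }. Then inf{ ‖F − G‖_{∞,[a,b]×[c,d]} : G ∈ W_{m,n} } ≤ ‖F^{(m+1,n+1)}‖_{∞,[a,b]×[c,d]} · h^{m+n+2} / ( 2^{m+n+2}·(m+1)!·(n+1)! ). -/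

import Mathlib

open scoped BigOperators

noncomputable section

/-- Sup norm `‖f‖_{∞,S}` of a function over a set `S`. -/
def supN {α : Type*} (S : Set α) (f : α → ℝ) : ℝ := ⨆ z : S, |f z.1|

/-- Operator norm of `L` over continuous functions on `R` with sup norm `≤ 1`. -/
def opN {α : Type*} [TopologicalSpace α] (R : Set α) (L : (α → ℝ) → α → ℝ) : ℝ :=
  ⨆ G : {G : α → ℝ // ContinuousOn G R ∧ supN R G ≤ 1}, supN R (L G.1)

/-- Bernstein basis function `B_i^m` scaled to `[a,b]`. -/
def bern (m : ℕ) (a b : ℝ) (i : ℕ) : ℝ → ℝ := fun x =>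
  (m.choose i : ℝ) * ((b - x) / (b - a)) ^ (m - i) * ((x - a) / (b - a)) ^ i

/-- Uniform node `x_i^m = a + (i/m)(b-a)`. -/
def node (m : ℕ) (a b : ℝ) (i : ℕ) : ℝ := a + (i : ℝ) / (m : ℝ) * (b - a)

/-- Bernstein collocation matrix `T_m = (B_j^m(x_i^m))_{ij}`. -/
def Tmat (m : ℕ) (a b : ℝ) : Matrix (Fin (m + 1)) (Fin (m + 1)) ℝ := fun i j =>
  bern m a b j (node m a b i)

/-- Dual functionals `λ_j^m f = (T_m⁻¹ · (f(x_i^m))_i)_j`. -/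
def lam (m : ℕ) (a b : ℝ) (j : Fin (m + 1)) (f : ℝ → ℝ) : ℝ :=
  (Tmat m a b)⁻¹.mulVec (fun i => f (node m a b i)) j

/-- `λ_j^m` with a natural-number index (zero out of range). -/
def lamN (m : ℕ) (a b : ℝ) (j : ℕ) (f : ℝ → ℝ) : ℝ :=
  if h : j < m + 1 then lam m a b ⟨j, h⟩ f else 0

/-- The index map `α^k : i ↦ i·(m_r/m_k)` (when `m_k ∣ m_r` and `i ≤ m_k` the `min` is inert). -/
def alphaF (mk mr : ℕ) (i : Fin (mk + 1)) : Fin (mr + 1) :=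
  ⟨min (i.1 * (mr / mk)) mr, Nat.lt_succ_of_le (min_le_right _ _)⟩

/-- Degree elevation matrix `E_{m_k}^{m_r} = (λ_i^{m_r}(B_j^{m_k}))_{ij}`. -/
def Emat (mk mr : ℕ) (a b : ℝ) : Matrix (Fin (mr + 1)) (Fin (mk + 1)) ℝ := fun i j =>
  lam mr a b i (bern mk a b j)

/-- Row submatrix `E_{m_k}^{m_r}(α^k,:)`. -/
def Esub (mk mr : ℕ) (a b : ℝ) : Matrix (Fin (mk + 1)) (Fin (mk + 1)) ℝ := fun i j =>
  Emat mk mr a b (alphaF mk mr i) j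

/-- Dual basis polynomials `D_j^{m_k} = Σ_ℓ (E(α^k,:)⁻¹)_{ℓ j} B_ℓ^{m_k}`. -/
def Dq (mk mr : ℕ) (a b : ℝ) (j : Fin (mk + 1)) : ℝ → ℝ := fun x =>
  ∑ l : Fin (mk + 1), (Esub mk mr a b)⁻¹ l j * bern mk a b l x

/-- `D_j^{m_k}` with a natural-number index (zero out of range). -/
def DqN (mk mr : ℕ) (a b : ℝ) (j : ℕ) : ℝ → ℝ :=
  if h : j < mk + 1 then Dq mk mr a b ⟨j, h⟩ else 0

/-- Functionals `μ_i^{m_k} = λ_{α^k_i}^{m_r}`. -/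
def mu (mk mr : ℕ) (a b : ℝ) (i : Fin (mk + 1)) (f : ℝ → ℝ) : ℝ :=
  lam mr a b (alphaF mk mr i) f

/-- Univariate quasi-interpolant `P_{m_k} f = Σ_i (μ_i^{m_k} f)·D_i^{m_k}`. -/
def Pop (mk mr : ℕ) (a b : ℝ) (f : ℝ → ℝ) : ℝ → ℝ := fun x =>
  ∑ i : Fin (mk + 1), mu mk mr a b i f * Dq mk mr a b i x

/-- Bivariate extension `𝐏_{m_k} = P_{m_k} × I` (acting in the first variable). -/
def PP (mk mr : ℕ) (a b : ℝ) (F : ℝ × ℝ → ℝ) : ℝ × ℝ → ℝ := fun z =>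
  Pop mk mr a b (fun x => F (x, z.2)) z.1

/-- Bivariate extension `𝐐_{n_ℓ} = I × Q_{n_ℓ}` (acting in the second variable). -/
def QQ (nl nr : ℕ) (c d : ℝ) (F : ℝ × ℝ → ℝ) : ℝ × ℝ → ℝ := fun z =>
  Pop nl nr c d (fun y => F (z.1, y)) z.2

/-- Maximum absolute row sum matrix norm. -/
def rowNorm {p q : ℕ} (A : Matrix (Fin p) (Fin q) ℝ) : ℝ := ⨆ i : Fin p, ∑ j, |A i j|

/-- `C_{m_r} = max_i sup{ |λ_i^{m_r} f| : f ∈ C[a,b], ‖f‖_∞ ≤ 1 }`. -/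
def Cbase (mr : ℕ) (a b : ℝ) : ℝ :=
  ⨆ i : Fin (mr + 1),
    ⨆ f : {f : ℝ → ℝ // ContinuousOn f (Set.Icc a b) ∧ supN (Set.Icc a b) f ≤ 1},
      |lam mr a b i f.1|

/-- `C_{m_r,m_k} = C_{m_r}·(m_k+1)·‖E_{m_k}^{m_r}(α^k,:)⁻¹‖_∞`. -/
def Cconst (mk mr : ℕ) (a b : ℝ) : ℝ :=
  Cbase mr a b * ((mk : ℝ) + 1) * rowNorm (Esub mk mr a b)⁻¹

/-- `Π_m`: univariate polynomial functions of degree at most `m`. -/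
def polyF (m : ℕ) : Submodule ℝ (ℝ → ℝ) :=
  Submodule.span ℝ {f : ℝ → ℝ | ∃ i ≤ m, f = fun x => x ^ i}

/-- `Π_p ⊗ Π_q`: bivariate polynomial functions of degree `≤ p` in `x` and `≤ q` in `y`. -/
def polyF2 (p q : ℕ) : Submodule ℝ (ℝ × ℝ → ℝ) :=
  Submodule.span ℝ {F : ℝ × ℝ → ℝ | ∃ i ≤ p, ∃ j ≤ q, F = fun z => z.1 ^ i * z.2 ^ j}

/-- `S_{𝐦,𝐧} = Σ_{k=0}^r Π_{m_k} ⊗ Π_{n_{r-k}}` (as a space of functions). -/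
def SmnF (r : ℕ) (m n : ℕ → ℕ) : Submodule ℝ (ℝ × ℝ → ℝ) :=
  ∑ k ∈ Finset.range (r + 1), polyF2 (m k) (n (r - k))

/-- `Π_p ⊗ Π_q` inside the bivariate polynomial ring. -/
def PiTP (p q : ℕ) : Submodule ℝ (MvPolynomial (Fin 2) ℝ) :=
  Submodule.span ℝ {P | ∃ i ≤ p, ∃ j ≤ q,
    P = MvPolynomial.monomial (Finsupp.single 0 i + Finsupp.single 1 j) (1 : ℝ)}

/-- `S_{𝐦,𝐧} = Σ_{k=0}^r Π_{m_k} ⊗ Π_{n_{r-k}}` in the bivariate polynomial ring. -/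
def SmnP (r : ℕ) (m n : ℕ → ℕ) : Submodule ℝ (MvPolynomial (Fin 2) ℝ) :=
  ∑ k ∈ Finset.range (r + 1), PiTP (m k) (n (r - k))

/-- The rectangle `[a,b] × [c,d]`. -/
def Rect (a b c d : ℝ) : Set (ℝ × ℝ) := Set.Icc a b ×ˢ Set.Icc c d

/-- `Fd` is a system of mixed partial derivatives of `Fd 0 0` of class `C^{p,q}` on the
rectangle: all mixed partials `F^{(i,j)}`, `i ≤ p`, `j ≤ q`, exist and are continuous. -/
def IsCpq (p q : ℕ) (a b c d : ℝ) (Fd : ℕ → ℕ → ℝ × ℝ → ℝ) : Prop :=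
  (∀ i < p, ∀ j ≤ q, ∀ z ∈ Rect a b c d,
      HasDerivWithinAt (fun x => Fd i j (x, z.2)) (Fd (i + 1) j z) (Set.Icc a b) z.1) ∧
  (∀ i ≤ p, ∀ j < q, ∀ z ∈ Rect a b c d,
      HasDerivWithinAt (fun y => Fd i j (z.1, y)) (Fd i (j + 1) z) (Set.Icc c d) z.2) ∧
  (∀ i ≤ p, ∀ j ≤ q, ContinuousOn (Fd i j) (Rect a b c d))

end

section Helpers

lemma key_mono {p q : ℝ} (hpq : p ≤ q) (f f' : ℝ → ℝ)
    (hf : ∀ t ∈ Set.Icc p q, HasDerivWithinAt f (f' t) (Set.Icc p q) t)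
    (h0 : ∀ t ∈ Set.Ioo p q, 0 ≤ f' t) : f p ≤ f q := by
  have hmono : MonotoneOn f (Set.Icc p q) := by
    apply monotoneOn_of_deriv_nonneg (convex_Icc p q)
    · exact fun t ht => (hf t ht).continuousWithinAt
    · intro t ht
      rw [interior_Icc] at ht
      exact ((hf t (Set.Ioo_subset_Icc_self ht)).hasDerivAt
        (Icc_mem_nhds ht.1 ht.2)).differentiableAt.differentiableWithinAt
    · intro t ht
      rw [interior_Icc] at ht
      rw [((hf t (Set.Ioo_subset_Icc_self ht)).hasDerivAt (Icc_mem_nhds ht.1 ht.2)).deriv]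
      exact h0 t ht
  exact hmono (Set.left_mem_Icc.2 hpq) (Set.right_mem_Icc.2 hpq) hpq


lemma grow {α β x0 : ℝ} (hx0 : x0 ∈ Set.Icc α β) {C : ℝ} (hC : 0 ≤ C) (p : ℕ)
    {g g' : ℝ → ℝ}
    (hd : ∀ t ∈ Set.Icc α β, HasDerivWithinAt g (g' t) (Set.Icc α β) t)
    (hg0 : g x0 = 0)
    (hb : ∀ t ∈ Set.Icc α β, |g' t| ≤ C * |t - x0| ^ p) :
    ∀ x ∈ Set.Icc α β, |g x| ≤ C * |x - x0| ^ (p + 1) / (p + 1) := by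
  intro x hx
  rcases le_total x0 x with hle | hle
  · have hsub : Set.Icc x0 x ⊆ Set.Icc α β := Set.Icc_subset_Icc hx0.1 hx.2
    have hg' : ∀ t ∈ Set.Icc x0 x, HasDerivWithinAt g (g' t) (Set.Icc x0 x) t :=
      fun t ht => (hd t (hsub ht)).mono hsub
    have hB' : ∀ t : ℝ, HasDerivAt (fun s : ℝ => C * (s - x0) ^ (p + 1) / (p + 1))
        (C * (t - x0) ^ p) t := by
      intro t
      have h1 : HasDerivAt (fun s : ℝ => (s - x0) ^ (p + 1))
          (((p : ℝ) + 1) * (t - x0) ^ p) t := by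
        have := ((hasDerivAt_id t).sub_const x0).fun_pow (p + 1)
        simpa using this
      have h2 := (h1.const_mul C).div_const ((p : ℝ) + 1)
      refine h2.congr_deriv ?_
      have : ((p : ℝ) + 1) ≠ 0 := by positivity
      field_simp
    have hbd : ∀ t ∈ Set.Icc x0 x, |g' t| ≤ C * (t - x0) ^ p := by
      intro t ht
      have h := hb t (hsub ht)
      rwa [abs_of_nonneg (by linarith [ht.1] : (0:ℝ) ≤ t - x0)] at h
    have h1 : g x ≤ C * (x - x0) ^ (p + 1) / (p + 1) := by
      have hk := key_mono hle (fun t => C * (t - x0) ^ (p + 1) / (p + 1) - g t)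
        (fun t => C * (t - x0) ^ p - g' t)
        (fun t ht => ((hB' t).hasDerivWithinAt).sub (hg' t ht))
        (fun t ht => by
          show (0:ℝ) ≤ C * (t - x0) ^ p - g' t
          linarith [(abs_le.mp (hbd t (Set.Ioo_subset_Icc_self ht))).2])
      have hz : C * (0:ℝ) ^ (p + 1) / ((p:ℝ) + 1) = 0 := by
        rw [zero_pow (Nat.succ_ne_zero p)]; ring
      simp only [sub_self, hg0] at hk
      rw [hz] at hk
      linarith [hk]
    have h2 : -(C * (x - x0) ^ (p + 1) / (p + 1)) ≤ g x := by
      have hk := key_mono hle (fun t => C * (t - x0) ^ (p + 1) / (p + 1) + g t)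
        (fun t => C * (t - x0) ^ p + g' t)
        (fun t ht => ((hB' t).hasDerivWithinAt).add (hg' t ht))
        (fun t ht => by
          show (0:ℝ) ≤ C * (t - x0) ^ p + g' t
          linarith [(abs_le.mp (hbd t (Set.Ioo_subset_Icc_self ht))).1])
      have hz : C * (0:ℝ) ^ (p + 1) / ((p:ℝ) + 1) = 0 := by
        rw [zero_pow (Nat.succ_ne_zero p)]; ring
      simp only [sub_self, hg0] at hk
      rw [hz] at hk
      linarith [hk]
    rw [abs_of_nonneg (by linarith : (0:ℝ) ≤ x - x0)]
    exact abs_le.2 ⟨h2, h1⟩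
  · have hsub : Set.Icc x x0 ⊆ Set.Icc α β := Set.Icc_subset_Icc hx.1 hx0.2
    have hg' : ∀ t ∈ Set.Icc x x0, HasDerivWithinAt g (g' t) (Set.Icc x x0) t :=
      fun t ht => (hd t (hsub ht)).mono hsub
    have hB' : ∀ t : ℝ, HasDerivAt (fun s : ℝ => C * (x0 - s) ^ (p + 1) / (p + 1))
        (-(C * (x0 - t) ^ p)) t := by
      intro t
      have h1 : HasDerivAt (fun s : ℝ => (x0 - s) ^ (p + 1))
          (((p : ℝ) + 1) * (x0 - t) ^ (p + 1 - 1) * (-1)) t := by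
        have := ((hasDerivAt_id t).const_sub x0).fun_pow (p + 1)
        simpa using this
      have h2 := (h1.const_mul C).div_const ((p : ℝ) + 1)
      refine h2.congr_deriv ?_
      have : ((p : ℝ) + 1) ≠ 0 := by positivity
      simp only [Nat.add_sub_cancel]
      field_simp
    have hbd : ∀ t ∈ Set.Icc x x0, |g' t| ≤ C * (x0 - t) ^ p := by
      intro t ht
      have h := hb t (hsub ht)
      rwa [abs_of_nonpos (by linarith [ht.2] : t - x0 ≤ 0), neg_sub] at h
    have h1 : g x ≤ C * (x0 - x) ^ (p + 1) / (p + 1) := by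
      have hk := key_mono hle (fun t => g t - C * (x0 - t) ^ (p + 1) / (p + 1))
        (fun t => g' t + C * (x0 - t) ^ p)
        (fun t ht => by
          have := (hg' t ht).sub ((hB' t).hasDerivWithinAt)
          refine this.congr_deriv ?_
          ring)
        (fun t ht => by
          show (0:ℝ) ≤ g' t + C * (x0 - t) ^ p
          linarith [(abs_le.mp (hbd t (Set.Ioo_subset_Icc_self ht))).1])
      have hz : C * (0:ℝ) ^ (p + 1) / ((p:ℝ) + 1) = 0 := by
        rw [zero_pow (Nat.succ_ne_zero p)]; ring
      simp only [sub_self, hg0] at hk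
      rw [hz] at hk
      linarith [hk]
    have h2 : -(C * (x0 - x) ^ (p + 1) / (p + 1)) ≤ g x := by
      have hk := key_mono hle (fun t => -(g t) - C * (x0 - t) ^ (p + 1) / (p + 1))
        (fun t => -(g' t) + C * (x0 - t) ^ p)
        (fun t ht => by
          have := ((hg' t ht).neg).sub ((hB' t).hasDerivWithinAt)
          refine this.congr_deriv ?_
          ring)
        (fun t ht => by
          show (0:ℝ) ≤ -(g' t) + C * (x0 - t) ^ p
          linarith [(abs_le.mp (hbd t (Set.Ioo_subset_Icc_self ht))).2])
      have hz : C * (0:ℝ) ^ (p + 1) / ((p:ℝ) + 1) = 0 := by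
        rw [zero_pow (Nat.succ_ne_zero p)]; ring
      simp only [sub_self, hg0] at hk
      rw [hz] at hk
      linarith [hk]
    rw [abs_of_nonpos (by linarith : x - x0 ≤ 0), neg_sub]
    exact abs_le.2 ⟨h2, h1⟩

lemma taylor_bound : ∀ (k : ℕ) {α β : ℝ} (f : ℕ → ℝ → ℝ) (M : ℝ)
    (_ : ∀ i ≤ k, ∀ t ∈ Set.Icc α β, HasDerivWithinAt (f i) (f (i+1) t) (Set.Icc α β) t)
    (_ : ∀ t ∈ Set.Icc α β, |f (k+1) t| ≤ M)
    {x0 : ℝ} (_ : x0 ∈ Set.Icc α β) (x : ℝ) (_ : x ∈ Set.Icc α β),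
    |f 0 x - ∑ i ∈ Finset.range (k+1), f i x0 * (x - x0)^i / (i.factorial : ℝ)|
      ≤ M / ((k+1).factorial : ℝ) * |x - x0|^(k+1) := by
  intro k
  induction k with
  | zero =>
    intro α β f M hd hM x0 hx0 x hx
    have hM0 : 0 ≤ M := le_trans (abs_nonneg _) (hM x0 hx0)
    have := grow hx0 hM0 0 (g := fun t => f 0 t - f 0 x0) (g' := fun t => f 1 t)
      (fun t ht => (hd 0 le_rfl t ht).sub_const _)
      (by simp)
      (fun t ht => by simpa using hM t ht)
      x hx
    simpa using this
  | succ k IH =>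
    intro α β f M hd hM x0 hx0 x hx
    have hM0 : 0 ≤ M := le_trans (abs_nonneg _) (hM x0 hx0)
    set R : ℝ → ℝ := fun t => f 0 t - ∑ i ∈ Finset.range (k+2), f i x0 * (t - x0)^i / (i.factorial : ℝ) with hR
    set R' : ℝ → ℝ := fun t => f 1 t - ∑ i ∈ Finset.range (k+1), f (i+1) x0 * (t - x0)^i / (i.factorial : ℝ) with hR'
    have hdR : ∀ t ∈ Set.Icc α β, HasDerivWithinAt R (R' t) (Set.Icc α β) t := by
      intro t ht
      have hS : HasDerivWithinAt
          (fun s => ∑ i ∈ Finset.range (k+2), f i x0 * (s - x0)^i / (i.factorial : ℝ))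
          (∑ i ∈ Finset.range (k+2), f i x0 * ((i:ℝ) * (t - x0)^(i-1)) / (i.factorial : ℝ))
          (Set.Icc α β) t := by
        apply HasDerivWithinAt.fun_sum
        intro i _
        have h1 : HasDerivAt (fun s : ℝ => (s - x0)^i) ((i:ℝ) * (t - x0)^(i-1)) t := by
          simpa using ((hasDerivAt_id t).sub_const x0).fun_pow i
        exact ((h1.const_mul (f i x0)).div_const _).hasDerivWithinAt
      have hsum : (∑ i ∈ Finset.range (k+2), f i x0 * ((i:ℝ) * (t - x0)^(i-1)) / (i.factorial : ℝ))
          = ∑ i ∈ Finset.range (k+1), f (i+1) x0 * (t - x0)^i / (i.factorial : ℝ) := by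
        rw [Finset.sum_range_succ']
        simp only [Nat.cast_zero, zero_mul, mul_zero, zero_div, add_zero]
        apply Finset.sum_congr rfl
        intro i _
        have hfac : ((i+1).factorial : ℝ) = ((i:ℝ)+1) * (i.factorial : ℝ) := by
          rw [Nat.factorial_succ]; push_cast; ring
        have hne : (i.factorial : ℝ) ≠ 0 := Nat.cast_ne_zero.2 (Nat.factorial_ne_zero i)
        rw [hfac]
        have : ((i:ℝ)+1) ≠ 0 := by positivity
        field_simp
        simp only [Nat.add_sub_cancel, Nat.add_sub_cancel_left]; push_cast; ring
      have := (hd 0 (by omega) t ht).sub hS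
      rw [hsum] at this
      exact this
    have hR0 : R x0 = 0 := by
      simp only [hR]
      rw [Finset.sum_eq_single 0]
      · simp
      · intro i _ hi
        rw [sub_self, zero_pow hi]
        ring
      · intro h; simp at h
    have hbR : ∀ t ∈ Set.Icc α β, |R' t| ≤ M / ((k+1).factorial : ℝ) * |t - x0|^(k+1) := by
      intro t ht
      exact IH (fun i => f (i+1)) M
        (fun i hi s hs => hd (i+1) (by omega) s hs)
        (fun s hs => hM s hs) hx0 t ht
    have hC0 : 0 ≤ M / ((k+1).factorial : ℝ) := by positivity
    have hgrow := grow hx0 hC0 (k+1) hdR hR0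
      (fun t ht => by
        have := hbR t ht
        calc |R' t| ≤ M / ((k+1).factorial : ℝ) * |t - x0|^(k+1) := this
          _ = M / ((k+1).factorial : ℝ) * |t - x0|^(k+1) := rfl)
      x hx
    calc |R x| ≤ M / ((k+1).factorial : ℝ) * |x - x0|^(k+1+1) / ((k+1:ℕ)+1) := hgrow
      _ = M / ((k+2).factorial : ℝ) * |x - x0|^(k+2) := by
        have h1 : ((k+2).factorial : ℝ) = ((k:ℝ)+2) * ((k+1).factorial : ℝ) := by
          rw [Nat.factorial_succ]; push_cast; ring
        rw [h1]
        have hne : ((k+1).factorial : ℝ) ≠ 0 := Nat.cast_ne_zero.2 (Nat.factorial_ne_zero _)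
        have : ((k:ℝ)+2) ≠ 0 := by positivity
        push_cast
        rw [div_mul_eq_mul_div, div_div, div_mul_eq_mul_div]
        ring


lemma pow_sub_mem (m i : ℕ) (hi : i ≤ m) (x0 : ℝ) :
    (fun u : ℝ => (u - x0) ^ i) ∈ polyF m := by
  have hrw : (fun u : ℝ => (u - x0) ^ i)
      = ∑ t ∈ Finset.range (i + 1), ((-x0) ^ (i - t) * (i.choose t : ℝ)) • (fun u : ℝ => u ^ t) := by
    funext u
    simp only [Finset.sum_apply, Pi.smul_apply, smul_eq_mul]
    rw [show u - x0 = u + (-x0) by ring, add_pow]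
    exact Finset.sum_congr rfl fun t ht => by ring
  rw [hrw]
  exact Submodule.sum_mem _ fun t ht => Submodule.smul_mem _ _
    (Submodule.subset_span ⟨t, le_trans (Nat.lt_succ_iff.mp (Finset.mem_range.mp ht)) hi, rfl⟩)

end Helpers

/-- Distance from an `F ∈ C^{m+1,n+1}` to the sum space
`W_{m,n} = {G₁ + G₂ : G₁(·,v) ∈ Π_m, G₂(u,·) ∈ Π_n}` on a square rectangle of side `h`:
`d(F, W_{m,n}) ≤ ‖F^{(m+1,n+1)}‖_∞ · h^{m+n+2} / (2^{m+n+2}(m+1)!(n+1)!)`. -/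
theorem stmt15 (m n : ℕ) (a b c d : ℝ) (h : ℝ) (hha : h = b - a) (hsq : b - a = d - c)
    (hpos : 0 < h) (Fd : ℕ → ℕ → ℝ × ℝ → ℝ) (hF : IsCpq (m + 1) (n + 1) a b c d Fd) :
    sInf {t : ℝ | ∃ G1 G2 : ℝ × ℝ → ℝ,
        ContinuousOn G1 (Rect a b c d) ∧ ContinuousOn G2 (Rect a b c d) ∧
        (∀ v ∈ Set.Icc c d, ∃ p ∈ polyF m, ∀ u ∈ Set.Icc a b, G1 (u, v) = p u) ∧
        (∀ u ∈ Set.Icc a b, ∃ p ∈ polyF n, ∀ v ∈ Set.Icc c d, G2 (u, v) = p v) ∧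
        t = supN (Rect a b c d) (fun z => Fd 0 0 z - (G1 z + G2 z))} ≤
      supN (Rect a b c d) (Fd (m + 1) (n + 1)) * h ^ (m + n + 2) /
        ((2 : ℝ) ^ (m + n + 2) * ((m + 1).factorial : ℝ) * ((n + 1).factorial : ℝ)) := by
  have hab : a < b := by rw [hha] at hpos; linarith
  have hcd : c < d := by rw [hha, hsq] at hpos; linarith
  have hhd : h = d - c := by rw [hha, hsq]
  set x0 : ℝ := (a + b) / 2 with hx0def
  set y0 : ℝ := (c + d) / 2 with hy0def
  have hx0m : x0 ∈ Set.Icc a b := by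
    constructor <;> simp only [hx0def] <;> linarith
  have hy0m : y0 ∈ Set.Icc c d := by
    constructor <;> simp only [hy0def] <;> linarith
  set M : ℝ := supN (Rect a b c d) (Fd (m + 1) (n + 1)) with hMdef
  have hcomp : IsCompact (Rect a b c d) := isCompact_Icc.prod isCompact_Icc
  have hMpt : ∀ w ∈ Rect a b c d, |Fd (m + 1) (n + 1) w| ≤ M := by
    intro w hw
    have hbdd := (hcomp.image_of_continuousOn
        ((hF.2.2 (m + 1) le_rfl (n + 1) le_rfl).abs)).bddAbove
    rw [Set.image_eq_range] at hbdd
    exact le_ciSup hbdd ⟨w, hw⟩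
  have hM0 : 0 ≤ M := Real.iSup_nonneg fun z => abs_nonneg _
  set G1 : ℝ × ℝ → ℝ := fun z => ∑ i ∈ Finset.range (m + 1),
      (Fd i 0 (x0, z.2) - ∑ j ∈ Finset.range (n + 1),
        Fd i j (x0, y0) * (z.2 - y0) ^ j / (j.factorial : ℝ))
        * (z.1 - x0) ^ i / (i.factorial : ℝ) with hG1
  set G2 : ℝ × ℝ → ℝ := fun z => ∑ j ∈ Finset.range (n + 1),
      Fd 0 j (z.1, y0) * (z.2 - y0) ^ j / (j.factorial : ℝ) with hG2
  have hcG1 : ContinuousOn G1 (Rect a b c d) := by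
    rw [hG1]
    apply continuousOn_finset_sum
    intro i hi
    have hi' : i ≤ m + 1 := by have := Finset.mem_range.mp hi; omega
    apply ContinuousOn.div_const
    apply ContinuousOn.mul
    · apply ContinuousOn.sub
      · exact (hF.2.2 i hi' 0 (by omega)).comp
          ((continuous_const.prodMk continuous_snd).continuousOn)
          (fun z hz => Set.mem_prod.2 ⟨hx0m, (Set.mem_prod.1 hz).2⟩)
      · apply continuousOn_finset_sum
        intro j hj
        exact (continuousOn_const.mul
          (((continuous_snd.sub continuous_const).pow j).continuousOn)).div_const _
    · exact ((continuous_fst.sub continuous_const).pow i).continuousOn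
  have hcG2 : ContinuousOn G2 (Rect a b c d) := by
    rw [hG2]
    apply continuousOn_finset_sum
    intro j hj
    have hj' : j ≤ n + 1 := by have := Finset.mem_range.mp hj; omega
    apply ContinuousOn.div_const
    apply ContinuousOn.mul
    · exact (hF.2.2 0 (by omega) j hj').comp
        ((continuous_fst.prodMk continuous_const).continuousOn)
        (fun z hz => Set.mem_prod.2 ⟨(Set.mem_prod.1 hz).1, hy0m⟩)
    · exact ((continuous_snd.sub continuous_const).pow j).continuousOn
  have hpol1 : ∀ v ∈ Set.Icc c d, ∃ p ∈ polyF m, ∀ u ∈ Set.Icc a b, G1 (u, v) = p u := by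
    intro v hv
    refine ⟨fun u => ∑ i ∈ Finset.range (m + 1),
      (Fd i 0 (x0, v) - ∑ j ∈ Finset.range (n + 1),
        Fd i j (x0, y0) * (v - y0) ^ j / (j.factorial : ℝ))
        * (u - x0) ^ i / (i.factorial : ℝ), ?_, fun u hu => rfl⟩
    have hrw : (fun u : ℝ => ∑ i ∈ Finset.range (m + 1),
        (Fd i 0 (x0, v) - ∑ j ∈ Finset.range (n + 1),
          Fd i j (x0, y0) * (v - y0) ^ j / (j.factorial : ℝ))
          * (u - x0) ^ i / (i.factorial : ℝ))
        = ∑ i ∈ Finset.range (m + 1),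
          ((Fd i 0 (x0, v) - ∑ j ∈ Finset.range (n + 1),
            Fd i j (x0, y0) * (v - y0) ^ j / (j.factorial : ℝ)) / (i.factorial : ℝ))
            • (fun u : ℝ => (u - x0) ^ i) := by
      funext u
      simp only [Finset.sum_apply, Pi.smul_apply, smul_eq_mul]
      exact Finset.sum_congr rfl fun i _ => by ring
    rw [hrw]
    exact Submodule.sum_mem _ fun i hi => Submodule.smul_mem _ _
      (pow_sub_mem m i (Nat.lt_succ_iff.mp (Finset.mem_range.mp hi)) x0)
  have hpol2 : ∀ u ∈ Set.Icc a b, ∃ p ∈ polyF n, ∀ v ∈ Set.Icc c d, G2 (u, v) = p v := by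
    intro u hu
    refine ⟨fun v => ∑ j ∈ Finset.range (n + 1),
      Fd 0 j (u, y0) * (v - y0) ^ j / (j.factorial : ℝ), ?_, fun v hv => rfl⟩
    have hrw : (fun v : ℝ => ∑ j ∈ Finset.range (n + 1),
        Fd 0 j (u, y0) * (v - y0) ^ j / (j.factorial : ℝ))
        = ∑ j ∈ Finset.range (n + 1),
          (Fd 0 j (u, y0) / (j.factorial : ℝ)) • (fun v : ℝ => (v - y0) ^ j) := by
      funext v
      simp only [Finset.sum_apply, Pi.smul_apply, smul_eq_mul]
      exact Finset.sum_congr rfl fun j _ => by ring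
    rw [hrw]
    exact Submodule.sum_mem _ fun j hj => Submodule.smul_mem _ _
      (pow_sub_mem n j (Nat.lt_succ_iff.mp (Finset.mem_range.mp hj)) y0)
  have key : ∀ z ∈ Rect a b c d, |Fd 0 0 z - (G1 z + G2 z)|
      ≤ M * h ^ (m + n + 2) /
        ((2 : ℝ) ^ (m + n + 2) * ((m + 1).factorial : ℝ) * ((n + 1).factorial : ℝ)) := by
    rintro ⟨u, v⟩ hz
    obtain ⟨hu, hv⟩ := Set.mem_prod.1 hz
    set Ffam : ℕ → ℝ → ℝ := fun i x => Fd i 0 (x, v) - ∑ j ∈ Finset.range (n + 1),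
      Fd i j (x, y0) * (v - y0) ^ j / (j.factorial : ℝ) with hFfam
    have hder : ∀ i ≤ m, ∀ t ∈ Set.Icc a b,
        HasDerivWithinAt (Ffam i) (Ffam (i + 1) t) (Set.Icc a b) t := by
      intro i hi t ht
      have h1 : HasDerivWithinAt (fun x => Fd i 0 (x, v)) (Fd (i + 1) 0 (t, v))
          (Set.Icc a b) t :=
        hF.1 i (by omega) 0 (by omega) (t, v) (Set.mem_prod.2 ⟨ht, hv⟩)
      have h2 : HasDerivWithinAt
          (fun x => ∑ j ∈ Finset.range (n + 1),
            Fd i j (x, y0) * (v - y0) ^ j / (j.factorial : ℝ))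
          (∑ j ∈ Finset.range (n + 1),
            Fd (i + 1) j (t, y0) * (v - y0) ^ j / (j.factorial : ℝ)) (Set.Icc a b) t := by
        apply HasDerivWithinAt.fun_sum
        intro j hj
        have hj' : j ≤ n + 1 := by have := Finset.mem_range.mp hj; omega
        exact ((hF.1 i (by omega) j hj' (t, y0)
          (Set.mem_prod.2 ⟨ht, hy0m⟩)).mul_const _).div_const _
      exact h1.sub h2
    have hbound : ∀ t ∈ Set.Icc a b,
        |Ffam (m + 1) t| ≤ M / ((n + 1).factorial : ℝ) * (h / 2) ^ (n + 1) := by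
      intro t ht
      have hT := taylor_bound n (fun j y => Fd (m + 1) j (t, y)) M
        (fun j hj s hs => hF.2.1 (m + 1) le_rfl j (by omega) (t, s)
          (Set.mem_prod.2 ⟨ht, hs⟩))
        (fun s hs => hMpt (t, s) (Set.mem_prod.2 ⟨ht, hs⟩)) hy0m v hv
      have habs : |v - y0| ≤ h / 2 := by
        have h1 : c ≤ v := hv.1
        have h2 : v ≤ d := hv.2
        rw [abs_le]
        constructor <;> rw [hy0def, hhd] <;> linarith
      calc |Ffam (m + 1) t| ≤ M / ((n + 1).factorial : ℝ) * |v - y0| ^ (n + 1) := hT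
        _ ≤ M / ((n + 1).factorial : ℝ) * (h / 2) ^ (n + 1) := by
            apply mul_le_mul_of_nonneg_left (pow_le_pow_left₀ (abs_nonneg _) habs _)
            positivity
    have hfin := taylor_bound m Ffam (M / ((n + 1).factorial : ℝ) * (h / 2) ^ (n + 1))
      hder hbound hx0m u hu
    have heq : Fd 0 0 (u, v) - (G1 (u, v) + G2 (u, v))
        = Ffam 0 u - ∑ i ∈ Finset.range (m + 1),
            Ffam i x0 * (u - x0) ^ i / (i.factorial : ℝ) := by
      simp only [hG1, hG2, hFfam]
      ring
    have habsx : |u - x0| ≤ h / 2 := by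
      have h1 : a ≤ u := hu.1
      have h2 : u ≤ b := hu.2
      rw [abs_le]
      constructor <;> rw [hx0def, hha] <;> linarith
    have hCn0 : 0 ≤ M / ((n + 1).factorial : ℝ) * (h / 2) ^ (n + 1) := by positivity
    calc |Fd 0 0 (u, v) - (G1 (u, v) + G2 (u, v))|
        = |Ffam 0 u - ∑ i ∈ Finset.range (m + 1),
            Ffam i x0 * (u - x0) ^ i / (i.factorial : ℝ)| := by rw [heq]
      _ ≤ (M / ((n + 1).factorial : ℝ) * (h / 2) ^ (n + 1)) / ((m + 1).factorial : ℝ)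
            * |u - x0| ^ (m + 1) := hfin
      _ ≤ (M / ((n + 1).factorial : ℝ) * (h / 2) ^ (n + 1)) / ((m + 1).factorial : ℝ)
            * (h / 2) ^ (m + 1) := by
          apply mul_le_mul_of_nonneg_left (pow_le_pow_left₀ (abs_nonneg _) habsx _)
          positivity
      _ = M * h ^ (m + n + 2) /
          ((2 : ℝ) ^ (m + n + 2) * ((m + 1).factorial : ℝ) * ((n + 1).factorial : ℝ)) := by
          have hm : ((m + 1).factorial : ℝ) ≠ 0 := Nat.cast_ne_zero.2 (Nat.factorial_ne_zero _)
          have hn : ((n + 1).factorial : ℝ) ≠ 0 := Nat.cast_ne_zero.2 (Nat.factorial_ne_zero _)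
          rw [div_pow, div_pow]
          field_simp
          ring
  have hRHS0 : 0 ≤ M * h ^ (m + n + 2) /
      ((2 : ℝ) ^ (m + n + 2) * ((m + 1).factorial : ℝ) * ((n + 1).factorial : ℝ)) := by
    positivity
  apply csInf_le_of_le (b := supN (Rect a b c d) (fun z => Fd 0 0 z - (G1 z + G2 z)))
  · refine ⟨0, fun t ht => ?_⟩
    obtain ⟨g1, g2, _, _, _, _, rfl⟩ := ht
    exact Real.iSup_nonneg fun z => abs_nonneg _
  · exact ⟨G1, G2, hcG1, hcG2, hpol1, hpol2, rfl⟩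
  · exact Real.iSup_le (fun z => key z.1 z.2) hRHS0
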